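/- arXiv:1905.04750 — 2 statements merged into one kernel-verified Lean document; each statement's English description precedes it below -/
import Mathlib

section
/- Fix d ≥ 2 and q ∈ [1,∞). Let D(d,p) be the number of primitive points of Z^d with all coordinates nonnegative and q-norm at most p. Then D(d,p)/p^d → Γ(1/q+1)^d/(Γ(d/q+1)·ζ(d)) as p → ∞. -/
open Filter Pointwise

def IsPrimitive {d : ℕ} (x : Fin d → ℤ) : Prop :=
  x ≠ 0 ∧ Finset.univ.gcd x = 1

def FirstNonzeroPos {d : ℕ} (x : Fin d → ℤ) : Prop :=
  ∃ i, 0 < x i ∧ ∀ j, j < i → x j = 0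

def norm1 {d : ℕ} (x : Fin d → ℤ) : ℕ := ∑ i, (x i).natAbs
noncomputable def zetaR (d : ℕ) : ℝ := ∑' n : ℕ, (1 : ℝ) / (n + 1) ^ d

open Filter MeasureTheory Real Set ENNReal Topology

noncomputable def nq (q : ℝ) {d : ℕ} (v : Fin d → ℝ) : ℝ := (∑ j, |v j| ^ q) ^ (1/q)

lemma sum_le_iff_nq_le {d : ℕ} {q : ℝ} (hq : 1 ≤ q) {s : ℝ} (hs : 0 ≤ s) (v : Fin d → ℝ) :
    (∑ j, |v j| ^ q) ≤ s ^ q ↔ nq q v ≤ s := by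
  have hq0 : 0 < q := lt_of_lt_of_le one_pos hq
  have h1 : (0:ℝ) ≤ ∑ j, |v j| ^ q :=
    Finset.sum_nonneg fun j _ => Real.rpow_nonneg (abs_nonneg _) _
  rw [nq, one_div, ← Real.rpow_le_rpow_iff (Real.rpow_nonneg h1 _) hs hq0,
    Real.rpow_inv_rpow h1 hq0.ne']

variable {d : ℕ} {q : ℝ}

lemma continuous_qsum (hq : 1 ≤ q) :
    Continuous (fun y : Fin d → ℝ => ∑ j, |y j| ^ q) := by
  refine continuous_finset_sum _ fun j _ => ?_
  exact (continuous_abs.comp (continuous_apply j)).rpow_const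
    (fun _ => Or.inr (by linarith))

lemma measurableSet_B (hq : 1 ≤ q) (r : ℝ) :
    MeasurableSet {y : Fin d → ℝ | ∑ j, |y j| ^ q ≤ r ^ q} :=
  (isClosed_le (continuous_qsum hq) continuous_const).measurableSet

/-- sign-flip map -/
def Tmap (s : Fin d → Bool) : (Fin d → ℝ) → (Fin d → ℝ) :=
  fun y j => if s j then y j else -y j

lemma Tmap_mp (s : Fin d → Bool) : MeasurePreserving (Tmap s) := by
  have : ∀ i : Fin d, MeasurePreserving (fun t : ℝ => if s i then t else -t) := by
    intro i
    cases h : s i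
    · simpa [h] using Measure.measurePreserving_neg (volume : Measure ℝ)
    · simp only [h, eq_self_iff_true, if_true]; exact MeasurePreserving.id volume
  exact volume_preserving_pi this

lemma Tmap_abs (s : Fin d → Bool) (y : Fin d → ℝ) (j : Fin d) : |Tmap s y j| = |y j| := by
  unfold Tmap; cases h : s j <;> simp [h]

lemma volume_hyperplane (j : Fin d) : volume {y : Fin d → ℝ | y j = 0} = 0 := by
  classical
  have : {y : Fin d → ℝ | y j = 0} =
      Set.pi Set.univ (fun i => if i = j then ({0} : Set ℝ) else Set.univ) := by
    ext y
    simp only [Set.mem_setOf_eq, Set.mem_pi, Set.mem_univ, forall_true_left]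
    constructor
    · intro h i; by_cases hi : i = j <;> simp [hi, h]
    · intro h; have := h j; simpa using this
  rw [this, volume_pi_pi]
  refine Finset.prod_eq_zero (Finset.mem_univ j) ?_
  simp

lemma volume_orthant_ball (hd : 0 < d) (hq : 1 ≤ q) {r : ℝ} (hr : 0 ≤ r) :
    volume {y : Fin d → ℝ | (∀ j, 0 ≤ y j) ∧ ∑ j, |y j| ^ q ≤ r ^ q}
      = ENNReal.ofReal (Gamma (1/q+1) ^ d / Gamma (d/q+1) * r ^ d) := by
  classical
  have : Nonempty (Fin d) := ⟨⟨0, hd⟩⟩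
  set B : Set (Fin d → ℝ) := {y | ∑ j, |y j| ^ q ≤ r ^ q} with hB
  have hBmeas : MeasurableSet B := measurableSet_B hq r
  -- full ball volume
  have hvolB : volume B = ENNReal.ofReal (2 ^ d * (Gamma (1/q+1) ^ d / Gamma (d/q+1) * r ^ d)) := by
    have h1 : B = {y : Fin d → ℝ | (∑ j, |y j| ^ q) ^ (1/q) ≤ r} := by
      ext y; exact sum_le_iff_nq_le hq hr y
    rw [h1, volume_sum_rpow_le _ hq r]
    rw [← ENNReal.ofReal_pow hr, ← ENNReal.ofReal_mul (by positivity)]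
    congr 1
    have hG1 : 0 < Gamma (1/q+1) := Gamma_pos_of_pos (by positivity)
    have hG2 : 0 < Gamma ((Fintype.card (Fin d)) / q + 1) := Gamma_pos_of_pos (by positivity)
    simp only [Fintype.card_fin]
    rw [mul_pow]
    ring
  -- orthants
  set O : (Fin d → Bool) → Set (Fin d → ℝ) :=
    fun s => {y | ∀ j, if s j then 0 ≤ y j else y j ≤ 0} with hO
  set O' : (Fin d → Bool) → Set (Fin d → ℝ) :=
    fun s => {y | ∀ j, if s j then 0 < y j else y j < 0} with hO'
  have hOeq : ∀ s, O s = Set.pi Set.univ (fun j => if s j then Ici (0:ℝ) else Iic 0) := by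
    intro s; ext y
    simp only [hO, mem_setOf_eq, Set.mem_univ_pi]
    refine forall_congr' fun j => ?_
    cases h : s j <;> simp [h]
  have hO'eq : ∀ s, O' s = Set.pi Set.univ (fun j => if s j then Ioi (0:ℝ) else Iio 0) := by
    intro s; ext y
    simp only [hO', mem_setOf_eq, Set.mem_univ_pi]
    refine forall_congr' fun j => ?_
    cases h : s j <;> simp [h]
  have hOmeas : ∀ s, MeasurableSet (O s) := by
    intro s; rw [hOeq]
    exact MeasurableSet.univ_pi fun j => by cases s j <;> simp
  have hO'meas : ∀ s, MeasurableSet (O' s) := by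
    intro s; rw [hO'eq]
    exact MeasurableSet.univ_pi fun j => by cases s j <;> simp
  -- preimage identities
  have hpre : ∀ s, Tmap s ⁻¹' (B ∩ O (fun _ => true)) = B ∩ O s := by
    intro s; ext y
    simp only [Set.mem_preimage, Set.mem_inter_iff, hB, hO, mem_setOf_eq, if_true]
    constructor
    · rintro ⟨h1, h2⟩
      refine ⟨by simpa [Tmap_abs] using h1, fun j => ?_⟩
      have := h2 j
      unfold Tmap at this
      cases h : s j <;> simp [h] at this ⊢ <;> linarith
    · rintro ⟨h1, h2⟩
      refine ⟨by simpa [Tmap_abs] using h1, fun j => ?_⟩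
      have := h2 j
      unfold Tmap
      cases h : s j <;> simp [h] at this ⊢ <;> linarith
  have hpre' : ∀ s, Tmap s ⁻¹' (B ∩ O' (fun _ => true)) = B ∩ O' s := by
    intro s; ext y
    simp only [Set.mem_preimage, Set.mem_inter_iff, hB, hO', mem_setOf_eq, if_true]
    constructor
    · rintro ⟨h1, h2⟩
      refine ⟨by simpa [Tmap_abs] using h1, fun j => ?_⟩
      have := h2 j
      unfold Tmap at this
      cases h : s j <;> simp [h] at this ⊢ <;> linarith
    · rintro ⟨h1, h2⟩
      refine ⟨by simpa [Tmap_abs] using h1, fun j => ?_⟩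
      have := h2 j
      unfold Tmap
      cases h : s j <;> simp [h] at this ⊢ <;> linarith
  have hvolO : ∀ s, volume (B ∩ O s) = volume (B ∩ O (fun _ => true)) := by
    intro s
    rw [← hpre s]
    exact (Tmap_mp s).measure_preimage ((hBmeas.inter (hOmeas _)).nullMeasurableSet)
  have hvolO' : ∀ s, volume (B ∩ O' s) = volume (B ∩ O' (fun _ => true)) := by
    intro s
    rw [← hpre' s]
    exact (Tmap_mp s).measure_preimage ((hBmeas.inter (hO'meas _)).nullMeasurableSet)
  -- closed orthant and open orthant have same measure within B
  have hZ : volume {y : Fin d → ℝ | ∃ j, y j = 0} = 0 := by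
    have : {y : Fin d → ℝ | ∃ j, y j = 0} = ⋃ j, {y | y j = 0} := by
      ext y; simp
    rw [this]
    exact measure_iUnion_null fun j => volume_hyperplane j
  have hOO' : volume (B ∩ O (fun _ => true)) = volume (B ∩ O' (fun _ => true)) := by
    refine le_antisymm ?_ (measure_mono (Set.inter_subset_inter_right _ ?_))
    · calc volume (B ∩ O (fun _ => true))
          ≤ volume ((B ∩ O' (fun _ => true)) ∪ {y | ∃ j, y j = 0}) := by
            refine measure_mono ?_
            rintro y ⟨hy1, hy2⟩
            by_cases h : ∃ j, y j = 0
            · exact Or.inr h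
            · push_neg at h
              refine Or.inl ⟨hy1, fun j => ?_⟩
              have := hy2 j
              simp only [if_true] at this ⊢
              exact lt_of_le_of_ne this (Ne.symm (h j))
        _ ≤ volume (B ∩ O' (fun _ => true)) + volume {y : Fin d → ℝ | ∃ j, y j = 0} :=
            measure_union_le _ _
        _ = volume (B ∩ O' (fun _ => true)) := by rw [hZ, add_zero]
    · intro y hy j
      have := hy j
      simp only [if_true] at this ⊢
      exact le_of_lt this
  -- cover and disjointness
  have hcover : volume B ≤ (2:ℝ≥0∞) ^ d * volume (B ∩ O (fun _ => true)) := by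
    have hsub : B ⊆ ⋃ s ∈ (Finset.univ : Finset (Fin d → Bool)), B ∩ O s := by
      intro y hy
      refine Set.mem_biUnion (Finset.mem_univ (fun j => decide (0 ≤ y j))) ⟨hy, fun j => ?_⟩
      by_cases h : 0 ≤ y j <;> simp [h]
      linarith
    calc volume B ≤ ∑ s : (Fin d → Bool), volume (B ∩ O s) :=
          le_trans (measure_mono hsub) (measure_biUnion_finset_le _ _)
      _ = (2:ℝ≥0∞) ^ d * volume (B ∩ O (fun _ => true)) := by
          rw [Finset.sum_congr rfl (fun s _ => hvolO s), Finset.sum_const]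
          simp [Fintype.card_fun]
  have hdisj : volume B ≥ (2:ℝ≥0∞) ^ d * volume (B ∩ O (fun _ => true)) := by
    have hsub : ⋃ s ∈ (Finset.univ : Finset (Fin d → Bool)), B ∩ O' s ⊆ B := by
      simp only [Set.iUnion_subset_iff]
      exact fun s _ => Set.inter_subset_left
    have hdj : Set.PairwiseDisjoint (Finset.univ : Finset (Fin d → Bool))
        (fun s => B ∩ O' s) := by
      intro s _ t _ hst
      refine Set.disjoint_left.mpr ?_
      rintro y ⟨_, hy1⟩ ⟨_, hy2⟩
      refine hst ?_
      funext j
      have h1 := hy1 j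
      have h2 := hy2 j
      cases hs : s j <;> cases ht : t j <;> simp [hs, ht] at h1 h2 ⊢ <;> linarith
    calc (2:ℝ≥0∞) ^ d * volume (B ∩ O (fun _ => true))
        = ∑ s : (Fin d → Bool), volume (B ∩ O' s) := by
          rw [Finset.sum_congr rfl (fun s _ => hvolO' s), Finset.sum_const]
          rw [hOO']
          simp [Fintype.card_fun]
      _ = volume (⋃ s ∈ (Finset.univ : Finset (Fin d → Bool)), B ∩ O' s) :=
          (measure_biUnion_finset hdj (fun s _ => hBmeas.inter (hO'meas s))).symm
      _ ≤ volume B := measure_mono hsub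
  have hkey : (2:ℝ≥0∞) ^ d * volume (B ∩ O (fun _ => true)) = volume B :=
    le_antisymm hdisj hcover
  -- target set equals B ∩ O true
  have htarget : {y : Fin d → ℝ | (∀ j, 0 ≤ y j) ∧ ∑ j, |y j| ^ q ≤ r ^ q}
      = B ∩ O (fun _ => true) := by
    ext y
    simp only [Set.mem_inter_iff, hB, hO, mem_setOf_eq, if_true, and_comm]
  rw [htarget]
  have h2d : ((2:ℝ≥0∞) ^ d) ≠ 0 := by positivity
  have h2d' : ((2:ℝ≥0∞) ^ d) ≠ ⊤ := by
    exact ENNReal.pow_ne_top (by norm_num)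
  refine (ENNReal.mul_left_strictMono h2d h2d').injective ?_
  show volume (B ∩ O (fun _ => true)) * (2:ℝ≥0∞) ^ d = _ * (2:ℝ≥0∞) ^ d
  rw [mul_comm _ ((2:ℝ≥0∞)^d), mul_comm _ ((2:ℝ≥0∞)^d)]
  rw [hkey, hvolB, ← ENNReal.ofReal_ofNat 2, ← ENNReal.ofReal_pow (by norm_num),
    ← ENNReal.ofReal_mul (by positivity)]

/-! ### Lattice point counting -/

open scoped Classical in
noncomputable def ballM (d : ℕ) (q r : ℝ) : Finset (Fin d → ℤ) :=
  (Fintype.piFinset (fun _ : Fin d => Finset.Icc (0:ℤ) ⌊r⌋)).filter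
    (fun x => (∀ j, 0 ≤ x j) ∧ ∑ j, |(x j : ℝ)| ^ q ≤ r ^ q)

open scoped Classical in
noncomputable def ballN (d : ℕ) (q r : ℝ) : Finset (Fin d → ℤ) :=
  (ballM d q r).filter (fun x => x ≠ 0)

open scoped Classical in
noncomputable def ballD (d : ℕ) (q r : ℝ) : Finset (Fin d → ℤ) :=
  (ballN d q r).filter (fun x => IsPrimitive x)

variable {r : ℝ}

lemma coord_le (hq : 1 ≤ q) (hr : 0 ≤ r) {x : Fin d → ℤ} (h0 : ∀ j, 0 ≤ x j)
    (hs : ∑ j, |(x j : ℝ)| ^ q ≤ r ^ q) (j : Fin d) : (x j : ℝ) ≤ r := by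
  have hq0 : 0 < q := lt_of_lt_of_le one_pos hq
  have h1 : |(x j : ℝ)| ^ q ≤ r ^ q := by
    refine le_trans (Finset.single_le_sum (f := fun i => |(x i : ℝ)| ^ q)
      (fun i _ => Real.rpow_nonneg (abs_nonneg _) _) (Finset.mem_univ j)) hs
  have := (Real.rpow_le_rpow_iff (abs_nonneg _) hr hq0).mp h1
  exact le_trans (le_abs_self _) this

lemma mem_ballM (hq : 1 ≤ q) (hr : 0 ≤ r) {x : Fin d → ℤ} :
    x ∈ ballM d q r ↔ (∀ j, 0 ≤ x j) ∧ ∑ j, |(x j : ℝ)| ^ q ≤ r ^ q := by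
  classical
  rw [ballM, Finset.mem_filter]
  refine ⟨fun h => h.2, fun h => ⟨?_, h⟩⟩
  rw [Fintype.mem_piFinset]
  intro j
  rw [Finset.mem_Icc]
  exact ⟨h.1 j, Int.le_floor.mpr (coord_le hq hr h.1 h.2 j)⟩

lemma mem_ballN (hq : 1 ≤ q) (hr : 0 ≤ r) {x : Fin d → ℤ} :
    x ∈ ballN d q r ↔ x ≠ 0 ∧ (∀ j, 0 ≤ x j) ∧ ∑ j, |(x j : ℝ)| ^ q ≤ r ^ q := by
  classical
  rw [ballN, Finset.mem_filter, mem_ballM hq hr]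
  tauto

lemma mem_ballD (hq : 1 ≤ q) (hr : 0 ≤ r) {x : Fin d → ℤ} :
    x ∈ ballD d q r ↔ IsPrimitive x ∧ (∀ j, 0 ≤ x j) ∧ ∑ j, |(x j : ℝ)| ^ q ≤ r ^ q := by
  classical
  rw [ballD, Finset.mem_filter, mem_ballN hq hr]
  unfold IsPrimitive
  tauto

lemma ballM_card_le (hd : 0 < d) (hq : 1 ≤ q) (hr : 1 ≤ r) :
    ((ballM d q r).card : ℝ) ≤ (2 * r) ^ d := by
  classical
  have h1 : (ballM d q r).card ≤ (Fintype.piFinset (fun _ : Fin d => Finset.Icc (0:ℤ) ⌊r⌋)).card :=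
    Finset.card_filter_le _ _
  rw [Fintype.card_piFinset] at h1
  simp only [Int.card_Icc, Finset.prod_const, Finset.card_univ, Fintype.card_fin] at h1
  have h2 : ((⌊r⌋ + 1 - 0).toNat : ℝ) ≤ 2 * r := by
    have h3 : (0:ℤ) ≤ ⌊r⌋ + 1 - 0 := by
      have := Int.floor_nonneg.mpr (le_trans zero_le_one hr)
      omega
    have h4 : ((⌊r⌋ + 1 - 0).toNat : ℝ) = ((⌊r⌋ : ℝ) + 1) := by
      have h5 : ((⌊r⌋ + 1 - 0).toNat : ℤ) = ⌊r⌋ + 1 := by omega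
      exact_mod_cast congrArg (fun z : ℤ => (z : ℝ)) h5
    rw [h4]
    have := Int.floor_le r
    linarith
  calc ((ballM d q r).card : ℝ) ≤ (((⌊r⌋ + 1 - 0).toNat : ℝ)) ^ d := by
        exact_mod_cast h1
    _ ≤ (2 * r) ^ d := by
        exact pow_le_pow_left₀ (Nat.cast_nonneg _) h2 d

/-! ### Cubes and the sandwich -/

def cube {d : ℕ} (x : Fin d → ℤ) : Set (Fin d → ℝ) :=
  Set.pi Set.univ fun j => Ico (x j : ℝ) ((x j : ℝ) + 1)

lemma cube_volume {d : ℕ} (x : Fin d → ℤ) : volume (cube x) = 1 := by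
  rw [cube, volume_pi_pi]
  simp [Real.volume_Ico]

lemma cube_measurable {d : ℕ} (x : Fin d → ℤ) : MeasurableSet (cube x) :=
  MeasurableSet.univ_pi fun j => measurableSet_Ico

lemma cube_disjoint {d : ℕ} {x y : Fin d → ℤ} (h : x ≠ y) : Disjoint (cube x) (cube y) := by
  refine Set.disjoint_left.mpr fun z hz hz' => h ?_
  funext j
  have h1 := hz j (Set.mem_univ j)
  have h2 := hz' j (Set.mem_univ j)
  simp only [mem_Ico] at h1 h2
  have e1 : ⌊z j⌋ = x j := Int.floor_eq_iff.mpr ⟨h1.1, h1.2⟩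
  have e2 : ⌊z j⌋ = y j := Int.floor_eq_iff.mpr ⟨h2.1, h2.2⟩
  omega

lemma nq_add_le (hq : 1 ≤ q) (u v : Fin d → ℝ) : nq q (u + v) ≤ nq q u + nq q v := by
  have h₁ : 0 < q := lt_of_lt_of_le one_pos hq
  have : Fact (1 ≤ ENNReal.ofReal q) :=
    fact_iff.mpr (ENNReal.ofReal_one ▸ (ENNReal.ofReal_le_ofReal hq))
  have eq_norm := fun x : Fin d → ℝ => (PiLp.norm_eq_sum (p := .ofReal q) (f := WithLp.toLp _ x)
    ((ENNReal.toReal_ofReal (le_of_lt h₁)).symm ▸ h₁))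
  simp_rw [ENNReal.toReal_ofReal (le_of_lt h₁), Real.norm_eq_abs] at eq_norm
  have nm_add := fun x y : Fin d → ℝ =>
    norm_add_le (WithLp.toLp (ENNReal.ofReal q) x) (WithLp.toLp (ENNReal.ofReal q) y)
  simp_rw [← WithLp.toLp_add, eq_norm] at nm_add
  simpa [nq] using nm_add u v

lemma nq_le_of_forall_le (hq : 1 ≤ q) {v : Fin d → ℝ} (h : ∀ j, |v j| ≤ 1) :
    nq q v ≤ (d : ℝ) ^ (1/q : ℝ) := by
  have hq0 : 0 < q := lt_of_lt_of_le one_pos hq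
  rw [nq]
  refine Real.rpow_le_rpow (Finset.sum_nonneg fun j _ => Real.rpow_nonneg (abs_nonneg _) _)
    ?_ (by positivity)
  calc ∑ j, |v j| ^ q ≤ ∑ _j : Fin d, (1:ℝ) :=
        Finset.sum_le_sum fun j _ => Real.rpow_le_one (abs_nonneg _) (h j) hq0.le
    _ = d := by simp

lemma cube_subset (hq : 1 ≤ q) (hr : 0 ≤ r) {x : Fin d → ℤ} (hx : x ∈ ballM d q r) :
    cube x ⊆ {y : Fin d → ℝ | (∀ j, 0 ≤ y j) ∧
      ∑ j, |y j| ^ q ≤ (r + (d : ℝ) ^ (1/q : ℝ)) ^ q} := by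
  have hq0 : 0 < q := lt_of_lt_of_le one_pos hq
  obtain ⟨h0, hs⟩ := (mem_ballM hq hr).mp hx
  intro y hy
  have hy' : ∀ j, (x j : ℝ) ≤ y j ∧ y j < (x j : ℝ) + 1 := by
    intro j; exact (hy j (Set.mem_univ j))
  have hpos : ∀ j, 0 ≤ y j := by
    intro j
    have := (hy' j).1
    have h2 : (0:ℝ) ≤ (x j : ℝ) := Int.cast_nonneg_iff.mpr (h0 j)
    linarith
  refine ⟨hpos, ?_⟩
  have hc : (0:ℝ) ≤ (d : ℝ) ^ (1/q : ℝ) := Real.rpow_nonneg (Nat.cast_nonneg d) _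
  rw [sum_le_iff_nq_le hq (by linarith)]
  have hdecomp : y = (fun j => (x j : ℝ)) + (fun j => y j - (x j : ℝ)) := by
    funext j; simp
  calc nq q y ≤ nq q (fun j => (x j : ℝ)) + nq q (fun j => y j - (x j : ℝ)) := by
        nth_rewrite 1 [hdecomp]
        exact nq_add_le hq _ _
    _ ≤ r + (d : ℝ) ^ (1/q : ℝ) := by
        refine add_le_add ?_ ?_
        · rw [← sum_le_iff_nq_le hq hr]; exact hs
        · refine nq_le_of_forall_le hq fun j => ?_
          have := hy' j
          rw [abs_le]; constructor <;> [linarith; linarith]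

lemma subset_cubes (hq : 1 ≤ q) (hr : 0 ≤ r) :
    {y : Fin d → ℝ | (∀ j, 0 ≤ y j) ∧ ∑ j, |y j| ^ q ≤ r ^ q} ⊆
      ⋃ x ∈ ballM d q r, cube x := by
  intro y ⟨h0, hs⟩
  have hq0 : 0 < q := lt_of_lt_of_le one_pos hq
  refine Set.mem_biUnion (s := (ballM d q r : Set (Fin d → ℤ))) (x := fun j => ⌊y j⌋) ?_ ?_
  · show (fun j => ⌊y j⌋) ∈ ballM d q r
    rw [mem_ballM hq hr]
    refine ⟨fun j => Int.floor_nonneg.mpr (h0 j), le_trans (Finset.sum_le_sum fun j _ => ?_) hs⟩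
    refine Real.rpow_le_rpow (abs_nonneg _) ?_ hq0.le
    rw [abs_of_nonneg (by exact_mod_cast Int.floor_nonneg.mpr (h0 j)),
      abs_of_nonneg (h0 j)]
    exact Int.floor_le _
  · intro j _
    exact ⟨Int.floor_le _, Int.lt_floor_add_one _⟩

noncomputable def Vq (d : ℕ) (q : ℝ) : ℝ := Gamma (1/q+1) ^ d / Gamma (d/q+1)

lemma Mcard_lower (hd : 0 < d) (hq : 1 ≤ q) (hr : 0 ≤ r) :
    Vq d q * r ^ d ≤ ((ballM d q r).card : ℝ) := by
  have h1 : ENNReal.ofReal (Vq d q * r ^ d) ≤ ((ballM d q r).card : ℝ≥0∞) := by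
    rw [Vq, ← volume_orthant_ball hd hq hr]
    refine le_trans (measure_mono (subset_cubes hq hr)) ?_
    refine le_trans (measure_biUnion_finset_le _ _) ?_
    simp [cube_volume]
  rw [← ENNReal.ofReal_natCast] at h1
  exact (ENNReal.ofReal_le_ofReal_iff (Nat.cast_nonneg _)).mp h1

lemma Mcard_upper (hd : 0 < d) (hq : 1 ≤ q) (hr : 0 ≤ r) :
    ((ballM d q r).card : ℝ) ≤ Vq d q * (r + (d:ℝ) ^ (1/q : ℝ)) ^ d := by
  have hc : (0:ℝ) ≤ (d : ℝ) ^ (1/q : ℝ) := Real.rpow_nonneg (Nat.cast_nonneg d) _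
  have h1 : ((ballM d q r).card : ℝ≥0∞) ≤ ENNReal.ofReal (Vq d q * (r + (d:ℝ) ^ (1/q:ℝ)) ^ d) := by
    rw [Vq, ← volume_orthant_ball hd hq (by linarith)]
    calc ((ballM d q r).card : ℝ≥0∞)
        = ∑ x ∈ ballM d q r, volume (cube x) := by simp [cube_volume]
      _ = volume (⋃ x ∈ ballM d q r, cube x) := by
          refine (measure_biUnion_finset ?_ fun x _ => cube_measurable x).symm
          exact fun x _ y _ hxy => cube_disjoint hxy
      _ ≤ _ := measure_mono (Set.iUnion₂_subset fun x hx => cube_subset hq hr hx)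
  rw [← ENNReal.ofReal_natCast] at h1
  have hV : 0 ≤ Vq d q := by
    rw [Vq]
    have hG1 : 0 < Gamma (1/q+1) := Gamma_pos_of_pos (by positivity)
    have hG2 : 0 < Gamma ((d:ℝ)/q+1) := Gamma_pos_of_pos (by positivity)
    positivity
  exact (ENNReal.ofReal_le_ofReal_iff (by positivity)).mp h1

lemma Mcard_eq (hq : 1 ≤ q) (hr : 0 ≤ r) :
    (ballM d q r).card = (ballN d q r).card + 1 := by
  classical
  have h0 : (0 : Fin d → ℤ) ∈ ballM d q r := by
    rw [mem_ballM hq hr]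
    have hq0 : 0 < q := lt_of_lt_of_le one_pos hq
    refine ⟨fun j => le_refl 0, ?_⟩
    simp only [Pi.zero_apply, Int.cast_zero, abs_zero, Real.zero_rpow hq0.ne',
      Finset.sum_const_zero]
    exact Real.rpow_nonneg hr q
  have := Finset.card_filter_add_card_filter_not
    (s := ballM d q r) (p := fun x => x ≠ 0)
  have h2 : (ballM d q r).filter (fun x => ¬ x ≠ 0) = {0} := by
    ext x
    simp only [Finset.mem_filter, not_not, Finset.mem_singleton]
    exact ⟨fun h => h.2, fun h => ⟨h ▸ h0, h⟩⟩
  rw [h2] at this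
  simp only [Finset.card_singleton] at this
  rw [ballN]
  convert this.symm using 2

lemma tendsto_Mcard (hd : 0 < d) (hq : 1 ≤ q) :
    Tendsto (fun r : ℝ => ((ballM d q r).card : ℝ) / r ^ d) atTop (𝓝 (Vq d q)) := by
  set c : ℝ := (d : ℝ) ^ (1/q : ℝ) with hc
  have hc0 : 0 ≤ c := Real.rpow_nonneg (Nat.cast_nonneg d) _
  have hupper : Tendsto (fun r : ℝ => Vq d q * ((r + c) / r) ^ d) atTop (𝓝 (Vq d q)) := by
    have h1 : Tendsto (fun r : ℝ => (r + c) / r) atTop (𝓝 1) := by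
      have : (fun r : ℝ => (r + c) / r) =ᶠ[atTop] (fun r => 1 + c / r) := by
        filter_upwards [eventually_gt_atTop 0] with r hr
        field_simp
      rw [tendsto_congr' this]
      have := tendsto_const_nhds (x := (1:ℝ)) (f := atTop).add
        (Tendsto.div_atTop (tendsto_const_nhds (x := c)) tendsto_id)
      simpa using this
    have h2 := (h1.pow d).const_mul (Vq d q)
    simpa using h2
  refine tendsto_of_tendsto_of_tendsto_of_le_of_le' tendsto_const_nhds hupper ?_ ?_
  · filter_upwards [eventually_ge_atTop (1:ℝ)] with r hr
    have hrd : (0:ℝ) < r ^ d := by positivity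
    rw [le_div_iff₀ hrd]
    exact Mcard_lower hd hq (by linarith)
  · filter_upwards [eventually_ge_atTop (1:ℝ)] with r hr
    have hrd : (0:ℝ) < r ^ d := by positivity
    rw [div_le_iff₀ hrd]
    calc ((ballM d q r).card : ℝ) ≤ Vq d q * (r + c) ^ d := Mcard_upper hd hq (by linarith)
      _ = Vq d q * ((r + c) / r) ^ d * r ^ d := by
          rw [div_pow, mul_assoc, div_mul_cancel₀]
          positivity

lemma tendsto_Ncard (hd : 0 < d) (hq : 1 ≤ q) :
    Tendsto (fun r : ℝ => ((ballN d q r).card : ℝ) / r ^ d) atTop (𝓝 (Vq d q)) := by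
  have h1 : Tendsto (fun r : ℝ => ((ballM d q r).card : ℝ) / r ^ d - 1 / r ^ d)
      atTop (𝓝 (Vq d q - 0)) := by
    refine (tendsto_Mcard hd hq).sub ?_
    have : Tendsto (fun r : ℝ => r ^ d) atTop atTop :=
      tendsto_pow_atTop hd.ne'
    simp only [one_div]; exact this.inv_tendsto_atTop
  rw [sub_zero] at h1
  refine h1.congr' ?_
  filter_upwards [eventually_ge_atTop (1:ℝ)] with r hr
  rw [Mcard_eq hq (by linarith)]
  push_cast
  ring

/-! ### Dilation and Möbius -/

open ArithmeticFunction
open scoped ArithmeticFunction.Moebius ArithmeticFunction.zeta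

lemma scale_mem {k : ℕ} (hq : 1 ≤ q) (hk : 0 < k) (hr : 0 ≤ r) (x : Fin d → ℤ) :
    (fun j => (k:ℤ) * x j) ∈ ballN d q r ↔ x ∈ ballN d q (r / k) := by
  have hq0 : 0 < q := lt_of_lt_of_le one_pos hq
  have hk0 : (0:ℝ) < (k:ℝ) := Nat.cast_pos.mpr hk
  rw [mem_ballN hq hr, mem_ballN hq (div_nonneg hr hk0.le)]
  have e1 : (fun j => (k:ℤ) * x j) ≠ 0 ↔ x ≠ 0 := by
    rw [Function.ne_iff, Function.ne_iff]
    refine exists_congr fun j => ?_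
    simp only [Pi.zero_apply, ne_eq, mul_eq_zero, not_or]
    have : (k:ℤ) ≠ 0 := by exact_mod_cast hk.ne'
    tauto
  have e2 : (∀ j, 0 ≤ (k:ℤ) * x j) ↔ (∀ j, 0 ≤ x j) := by
    refine forall_congr' fun j => ?_
    constructor
    · intro h; nlinarith [(by exact_mod_cast hk : (0:ℤ) < (k:ℤ))]
    · intro h; positivity
  have e3 : (∑ j, |(((k:ℤ) * x j : ℤ) : ℝ)| ^ q ≤ r ^ q) ↔
      (∑ j, |(x j : ℝ)| ^ q ≤ (r / k) ^ q) := by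
    have hsum : ∑ j, |(((k:ℤ) * x j : ℤ) : ℝ)| ^ q = (k:ℝ)^q * ∑ j, |(x j : ℝ)| ^ q := by
      rw [Finset.mul_sum]
      refine Finset.sum_congr rfl fun j _ => ?_
      push_cast
      rw [abs_mul, abs_of_pos hk0, Real.mul_rpow hk0.le (abs_nonneg _)]
    rw [hsum, Real.div_rpow hr hk0.le]
    rw [mul_comm, ← le_div_iff₀ (Real.rpow_pos_of_pos hk0 q)]
  rw [e1, e2, e3]

lemma card_dilate {k : ℕ} (hq : 1 ≤ q) (hk : 0 < k) (hr : 0 ≤ r) :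
    (ballN d q (r / k)).card =
      ((ballN d q r).filter (fun x => ∀ j, (k:ℤ) ∣ x j)).card := by
  classical
  have hkZ : (k:ℤ) ≠ 0 := by exact_mod_cast hk.ne'
  refine Finset.card_bij (fun x _ => fun j => (k:ℤ) * x j) ?_ ?_ ?_
  · intro x hx
    rw [Finset.mem_filter]
    exact ⟨(scale_mem hq hk hr x).mpr hx, fun j => dvd_mul_right _ _⟩
  · intro x hx y hy h
    funext j
    have := congrFun h j
    exact mul_left_cancel₀ hkZ this
  · intro y hy
    rw [Finset.mem_filter] at hy
    obtain ⟨hy1, hy2⟩ := hy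
    refine ⟨fun j => y j / k, ?_, ?_⟩
    · have heq : (fun j => (k:ℤ) * (y j / k)) = y := by
        funext j; exact Int.mul_ediv_cancel' (hy2 j)
      exact (scale_mem hq hk hr _).mp (by rw [heq]; exact hy1)
    · funext j; exact Int.mul_ediv_cancel' (hy2 j)

lemma gcd_nonneg_int (x : Fin d → ℤ) : 0 ≤ Finset.univ.gcd x := by
  exact Int.nonneg_of_normalize_eq_self
    (Finset.normalize_gcd (s := (Finset.univ : Finset (Fin d))) (f := x))

open scoped Classical in
lemma moebius_inner (hq : 1 ≤ q) (hr : 0 ≤ r) {x : Fin d → ℤ} (hx : x ∈ ballN d q r) :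
    ∑ k ∈ Finset.Icc 1 ⌊r⌋₊, (μ k : ℤ) * (if (∀ j, (k:ℤ) ∣ x j) then 1 else 0)
      = if IsPrimitive x then 1 else 0 := by
  classical
  obtain ⟨hx0, h0, hs⟩ := (mem_ballN hq hr).mp hx
  set g : ℤ := Finset.univ.gcd x with hg
  set n : ℕ := g.natAbs with hn
  have hgn : g = (n : ℤ) := by
    rw [hn, Int.natAbs_of_nonneg (gcd_nonneg_int x)]  -- may need adjusting
  have hg0 : g ≠ 0 := by
    intro h
    refine hx0 (funext fun j => ?_)
    have := Finset.gcd_eq_zero_iff.mp h j (Finset.mem_univ j)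
    simpa using this
  have hn0 : 0 < n := by
    rw [hn]; exact Int.natAbs_pos.mpr hg0
  -- n ≤ ⌊r⌋₊
  have hnK : n ≤ ⌊r⌋₊ := by
    obtain ⟨j, hj⟩ := Function.ne_iff.mp hx0
    have hxj : 0 < x j := lt_of_le_of_ne (h0 j) (by simpa [eq_comm] using hj)
    have hdvd : (n:ℤ) ∣ x j := hgn ▸ Finset.gcd_dvd (Finset.mem_univ j)
    have h1 : (n:ℤ) ≤ x j := Int.le_of_dvd hxj hdvd
    have h2 : (x j : ℝ) ≤ r := coord_le hq hr h0 hs j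
    refine Nat.le_floor ?_
    calc (n : ℝ) ≤ ((x j : ℤ) : ℝ) := by exact_mod_cast h1
      _ ≤ r := h2
  have hdvd_iff : ∀ k : ℕ, (∀ j, (k:ℤ) ∣ x j) ↔ k ∣ n := by
    intro k
    constructor
    · intro h
      have : (k:ℤ) ∣ g := Finset.dvd_gcd fun j _ => h j
      rw [hgn] at this
      exact_mod_cast this
    · intro h j
      have hkg : (k:ℤ) ∣ g := by rw [hgn]; exact_mod_cast h
      exact dvd_trans hkg (Finset.gcd_dvd (Finset.mem_univ j))
  calc ∑ k ∈ Finset.Icc 1 ⌊r⌋₊, (μ k : ℤ) * (if (∀ j, (k:ℤ) ∣ x j) then 1 else 0)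
      = ∑ k ∈ Finset.Icc 1 ⌊r⌋₊, (if k ∣ n then (μ k : ℤ) else 0) := by
        refine Finset.sum_congr rfl fun k _ => ?_
        simp only [hdvd_iff k]
        by_cases h : k ∣ n <;> simp [h]
    _ = ∑ k ∈ (Finset.Icc 1 ⌊r⌋₊).filter (· ∣ n), (μ k : ℤ) := (Finset.sum_filter _ _).symm
    _ = ∑ k ∈ n.divisors, (μ k : ℤ) := by
        refine Finset.sum_congr ?_ (fun _ _ => rfl)
        ext k
        rw [Finset.mem_filter, Finset.mem_Icc, Nat.mem_divisors]
        constructor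
        · rintro ⟨⟨h1, h2⟩, h3⟩; exact ⟨h3, hn0.ne'⟩
        · rintro ⟨h1, h2⟩
          exact ⟨⟨Nat.pos_of_dvd_of_pos h1 hn0, le_trans (Nat.le_of_dvd hn0 h1) hnK⟩, h1⟩
    _ = (μ * (ζ : ArithmeticFunction ℤ)) n := (coe_mul_zeta_apply).symm
    _ = (1 : ArithmeticFunction ℤ) n := by rw [moebius_mul_coe_zeta]
    _ = if n = 1 then 1 else 0 := one_apply
    _ = if IsPrimitive x then 1 else 0 := by
        congr 1
        simp only [eq_iff_iff]
        constructor
        · intro h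
          refine ⟨hx0, ?_⟩
          rw [← hg, hgn, h]; rfl
        · intro h
          have : g = 1 := h.2
          rw [hgn] at this
          exact_mod_cast this

open scoped Classical in
lemma moebius_identity (hq : 1 ≤ q) (hr : 0 ≤ r) :
    ((ballD d q r).card : ℤ) =
      ∑ k ∈ Finset.Icc 1 ⌊r⌋₊, (μ k : ℤ) * ((ballN d q (r / k)).card : ℤ) := by
  classical
  refine Eq.symm ?_
  calc ∑ k ∈ Finset.Icc 1 ⌊r⌋₊, (μ k : ℤ) * ((ballN d q (r / k)).card : ℤ)
      = ∑ k ∈ Finset.Icc 1 ⌊r⌋₊, (μ k : ℤ) *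
          ∑ x ∈ ballN d q r, (if (∀ j, (k:ℤ) ∣ x j) then 1 else 0) := by
        refine Finset.sum_congr rfl fun k hk => ?_
        rw [Finset.mem_Icc] at hk
        rw [card_dilate hq hk.1 hr, Finset.card_filter]
        push_cast
        rfl
    _ = ∑ x ∈ ballN d q r, ∑ k ∈ Finset.Icc 1 ⌊r⌋₊,
          (μ k : ℤ) * (if (∀ j, (k:ℤ) ∣ x j) then 1 else 0) := by
        simp_rw [Finset.mul_sum]
        rw [Finset.sum_comm]
    _ = ∑ x ∈ ballN d q r, (if IsPrimitive x then 1 else 0) :=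
        Finset.sum_congr rfl fun x hx => moebius_inner hq hr hx
    _ = ((ballD d q r).card : ℤ) := by
        rw [ballD, Finset.card_filter]
        push_cast
        rfl

/-! ### Zeta values -/

lemma summable_zetaR (hd : 2 ≤ d) : Summable (fun n : ℕ => (1:ℝ) / ((n:ℝ) + 1) ^ d) := by
  have h1 : Summable (fun n : ℕ => (1:ℝ) / (n:ℝ) ^ d) :=
    Real.summable_one_div_nat_pow.mpr hd
  have h2 := (summable_nat_add_iff 1).mpr h1
  refine h2.congr fun n => ?_
  push_cast
  ring_nf

lemma summable_muR (hd : 2 ≤ d) : Summable (fun k : ℕ => ((μ k : ℤ) : ℝ) / (k:ℝ) ^ d) := by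
  have h1 : Summable (fun n : ℕ => (1:ℝ) / (n:ℝ) ^ d) :=
    Real.summable_one_div_nat_pow.mpr hd
  refine h1.of_norm_bounded fun k => ?_
  rcases Nat.eq_zero_or_pos k with hk | hk
  · subst hk
    simp
  · rw [Real.norm_eq_abs, abs_div, abs_of_nonneg (by positivity : (0:ℝ) ≤ (k:ℝ)^d), div_le_div_iff_of_pos_right (by positivity)]
    have := abs_moebius_le_one (n := k)
    exact_mod_cast this

lemma one_le_zetaR (hd : 2 ≤ d) : 1 ≤ zetaR d := by
  rw [zetaR]
  have h := summable_zetaR hd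
  have := Summable.le_tsum h 0 (fun n _ => by positivity)
  simpa using this

lemma zetaR_mul_mu (hd : 2 ≤ d) :
    zetaR d * (∑' k : ℕ, ((μ k : ℤ) : ℝ) / (k:ℝ) ^ d) = 1 := by
  have hs : 1 < ((d : ℂ)).re := by
    simp only [Complex.natCast_re]
    exact_mod_cast Nat.lt_of_lt_of_le Nat.one_lt_two hd
  have key := LSeries_zeta_mul_Lseries_moebius (s := (d:ℂ)) hs
  -- identify the zeta factor
  have hzeta : LSeries (fun n => ((ζ n : ℕ) : ℂ)) (d:ℂ) = ((zetaR d : ℝ) : ℂ) := by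
    rw [LSeries_zeta_eq_riemannZeta hs, zeta_eq_tsum_one_div_nat_add_one_cpow hs]
    rw [zetaR, Complex.ofReal_tsum]
    refine tsum_congr fun n => ?_
    rw [show ((n:ℂ) + 1) = (((n:ℕ) + 1 : ℕ) : ℂ) by push_cast; ring]
    rw [Complex.cpow_natCast ((((n:ℕ) + 1 : ℕ) : ℂ)) d]
    push_cast
    rfl
  have hmu : LSeries (fun n => ((μ n : ℤ) : ℂ)) (d:ℂ)
      = ((∑' k : ℕ, ((μ k : ℤ) : ℝ) / (k:ℝ) ^ d : ℝ) : ℂ) := by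
    rw [LSeries, Complex.ofReal_tsum]
    refine tsum_congr fun n => ?_
    rcases Nat.eq_zero_or_pos n with hn | hn
    · subst hn
      simp [LSeries.term]
    · rw [LSeries.term_of_ne_zero hn.ne']
      rw [Complex.cpow_natCast (n:ℂ) d]
      push_cast
      rfl
  rw [hzeta, hmu, ← Complex.ofReal_mul, ← Complex.ofReal_one] at key
  exact_mod_cast key

lemma ballN_eq_empty (hq : 1 ≤ q) {r : ℝ} (h0 : 0 ≤ r) (hr : r < 1) :
    ballN d q r = ∅ := by
  classical
  have hq0 : 0 < q := lt_of_lt_of_le one_pos hq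
  rw [Finset.eq_empty_iff_forall_notMem]
  intro x hx
  obtain ⟨hx0, hpos, hs⟩ := (mem_ballN hq h0).mp hx
  obtain ⟨j, hj⟩ := Function.ne_iff.mp hx0
  have h1 : (1:ℤ) ≤ x j := lt_of_le_of_ne (hpos j) (by simpa [eq_comm] using hj)
  have h1' : (1:ℝ) ≤ |(x j : ℝ)| := by
    rw [abs_of_nonneg (by exact_mod_cast hpos j)]
    exact_mod_cast h1
  have h2 : (1:ℝ) ≤ |(x j : ℝ)| ^ q := by
    calc (1:ℝ) = 1 ^ q := (Real.one_rpow q).symm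
      _ ≤ |(x j : ℝ)| ^ q := Real.rpow_le_rpow zero_le_one h1' hq0.le
  have h3 : (1:ℝ) ≤ ∑ i, |(x i : ℝ)| ^ q := by
    refine le_trans h2 (Finset.single_le_sum (f := fun i => |(x i : ℝ)| ^ q)
      (fun i _ => Real.rpow_nonneg (abs_nonneg _) _) (Finset.mem_univ j))
  have h4 : r ^ q < 1 := Real.rpow_lt_one h0 hr hq0
  linarith


/-- The number D(d,p) of nonnegative primitive points of ℤ^d with q-norm ≤ p satisfies
D(d,p)/p^d → Γ(1/q+1)^d/(Γ(d/q+1)·ζ(d)). -/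
theorem stmt_13 (d : ℕ) (hd : 2 ≤ d) (q : ℝ) (hq : 1 ≤ q) :
    Tendsto
      (fun p : ℕ =>
        (Nat.card {x : Fin d → ℤ //
            IsPrimitive x ∧ (∀ j, 0 ≤ x j) ∧ ∑ j, |(x j : ℝ)| ^ q ≤ (p : ℝ) ^ q} : ℝ)
          / (p : ℝ) ^ d)
      atTop (nhds (Real.Gamma (1 / q + 1) ^ d / (Real.Gamma (d / q + 1) * zetaR d))) := by
  classical
  have hd0 : 0 < d := lt_of_lt_of_le two_pos hd
  have hq0 : 0 < q := lt_of_lt_of_le one_pos hq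
  have hcard : ∀ p : ℕ, (Nat.card {x : Fin d → ℤ //
      IsPrimitive x ∧ (∀ j, 0 ≤ x j) ∧ ∑ j, |(x j : ℝ)| ^ q ≤ (p : ℝ) ^ q})
      = (ballD d q (p:ℝ)).card := by
    intro p
    have hset : {x : Fin d → ℤ |
        IsPrimitive x ∧ (∀ j, 0 ≤ x j) ∧ ∑ j, |(x j : ℝ)| ^ q ≤ (p : ℝ) ^ q}
        = ↑(ballD d q (p:ℝ)) := by
      ext x
      rw [Set.mem_setOf_eq, Finset.mem_coe, mem_ballD hq (Nat.cast_nonneg p)]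
    calc Nat.card {x : Fin d → ℤ //
        IsPrimitive x ∧ (∀ j, 0 ≤ x j) ∧ ∑ j, |(x j : ℝ)| ^ q ≤ (p : ℝ) ^ q}
        = Nat.card {x : Fin d → ℤ | IsPrimitive x ∧ (∀ j, 0 ≤ x j) ∧
            ∑ j, |(x j : ℝ)| ^ q ≤ (p : ℝ) ^ q} := rfl
      _ = (ballD d q (p:ℝ)).card := by
          rw [hset, Nat.card_coe_set_eq, Set.ncard_coe_finset]
  set F : ℕ → ℕ → ℝ := fun p k =>
    ((μ k : ℤ) : ℝ) * ((ballN d q ((p:ℝ)/(k:ℝ))).card : ℝ) / (p:ℝ) ^ d with hF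
  set g : ℕ → ℝ := fun k => ((μ k : ℤ) : ℝ) * Vq d q / (k:ℝ) ^ d with hg
  have habs_mu : ∀ k : ℕ, |((μ k : ℤ) : ℝ)| ≤ 1 := by
    intro k
    exact_mod_cast abs_moebius_le_one (n := k)
  have hDsum : ∀ᶠ p : ℕ in atTop,
      ((ballD d q (p:ℝ)).card : ℝ) / (p:ℝ) ^ d = ∑' k, F p k := by
    filter_upwards [eventually_ge_atTop 1] with p hp
    have hp0 : (0:ℝ) ≤ (p:ℝ) := Nat.cast_nonneg p
    have hid := moebius_identity (d := d) hq hp0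
    have hfloor : ⌊(p:ℝ)⌋₊ = p := Nat.floor_natCast p
    rw [hfloor] at hid
    have hidR : ((ballD d q (p:ℝ)).card : ℝ)
        = ∑ k ∈ Finset.Icc 1 p, ((μ k : ℤ) : ℝ) * ((ballN d q ((p:ℝ)/(k:ℝ))).card : ℝ) := by
      exact_mod_cast congrArg (fun z : ℤ => (z : ℝ)) hid
    rw [hidR, Finset.sum_div]
    refine (tsum_eq_sum ?_).symm
    intro k hk
    rw [Finset.mem_Icc] at hk
    push_neg at hk
    rcases Nat.eq_zero_or_pos k with h0 | h0
    · subst h0; simp [hF]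
    · have hkp : p < k := hk h0
      have hlt : ((p:ℝ)/(k:ℝ)) < 1 := by
        rw [div_lt_one (by exact_mod_cast h0)]
        exact_mod_cast hkp
      show ((μ k : ℤ) : ℝ) * ((ballN d q ((p:ℝ)/(k:ℝ))).card : ℝ) / (p:ℝ) ^ d = 0
      rw [ballN_eq_empty hq (by positivity) hlt]
      simp
  have hab : ∀ k : ℕ, Tendsto (fun p : ℕ => F p k) atTop (𝓝 (g k)) := by
    intro k
    rcases Nat.eq_zero_or_pos k with h0 | h0
    · subst h0
      have hF0 : (fun p : ℕ => F p 0) = fun _ => 0 := by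
        funext p
        show ((μ 0 : ℤ) : ℝ) * _ / _ = 0
        simp
      have hg0 : g 0 = 0 := by
        show ((μ 0 : ℤ) : ℝ) * Vq d q / ((0:ℕ):ℝ) ^ d = 0
        simp
      rw [hF0, hg0]
      exact tendsto_const_nhds
    · have hk0 : (0:ℝ) < (k:ℝ) := by exact_mod_cast h0
      have h1 : Tendsto (fun p : ℕ => (p:ℝ)/(k:ℝ)) atTop atTop :=
        (tendsto_natCast_atTop_atTop).atTop_div_const hk0
      have h2 := (tendsto_Ncard (d := d) hd0 hq).comp h1
      have h3 := ((h2.const_mul (((μ k : ℤ) : ℝ))).div_const ((k:ℝ) ^ d))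
      have hgk : g k = ((μ k : ℤ) : ℝ) * Vq d q / (k:ℝ) ^ d := rfl
      rw [hgk]
      refine h3.congr' ?_
      filter_upwards [eventually_ge_atTop 1] with p hp
      have hp0 : (0:ℝ) < (p:ℝ) := by exact_mod_cast hp
      have hpne : ((p:ℝ)) ≠ 0 := hp0.ne'
      have hkne : ((k:ℝ)) ≠ 0 := hk0.ne'
      show ((μ k : ℤ) : ℝ) * (((ballN d q ((p:ℝ)/(k:ℝ))).card : ℝ) / ((p:ℝ)/(k:ℝ)) ^ d)
          / (k:ℝ) ^ d = F p k
      show _ = ((μ k : ℤ) : ℝ) * ((ballN d q ((p:ℝ)/(k:ℝ))).card : ℝ) / (p:ℝ) ^ d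
      rw [div_pow]
      field_simp
  have h_bound : ∀ᶠ p : ℕ in atTop, ∀ k, ‖F p k‖ ≤ (2:ℝ) ^ d * (1 / (k:ℝ) ^ d) := by
    filter_upwards [eventually_ge_atTop 1] with p hp k
    have hp0 : (0:ℝ) < (p:ℝ) := by exact_mod_cast hp
    rcases Nat.eq_zero_or_pos k with h0 | h0
    · subst h0
      have : F p 0 = 0 := by
        show ((μ 0 : ℤ) : ℝ) * _ / _ = 0
        simp
      rw [this]
      simp
    · have hk0 : (0:ℝ) < (k:ℝ) := by exact_mod_cast h0
      have hcard2 : ((ballN d q ((p:ℝ)/(k:ℝ))).card : ℝ)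
          ≤ 2 ^ d * ((p:ℝ) ^ d / (k:ℝ) ^ d) := by
        rcases lt_or_ge ((p:ℝ)/(k:ℝ)) 1 with hlt | hge
        · rw [ballN_eq_empty hq (by positivity) hlt]
          simp only [Finset.card_empty, Nat.cast_zero]
          positivity
        · calc ((ballN d q ((p:ℝ)/(k:ℝ))).card : ℝ)
              ≤ ((ballM d q ((p:ℝ)/(k:ℝ))).card : ℝ) := by
                exact_mod_cast Nat.cast_le.mpr (Finset.card_filter_le _ _)
            _ ≤ (2 * ((p:ℝ)/(k:ℝ))) ^ d := ballM_card_le hd0 hq hge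
            _ = 2 ^ d * ((p:ℝ) ^ d / (k:ℝ) ^ d) := by
                rw [mul_pow, div_pow]
      calc ‖F p k‖ = |((μ k : ℤ) : ℝ)| * ((ballN d q ((p:ℝ)/(k:ℝ))).card : ℝ) / (p:ℝ) ^ d := by
            show ‖((μ k : ℤ) : ℝ) * ((ballN d q ((p:ℝ)/(k:ℝ))).card : ℝ) / (p:ℝ) ^ d‖ = _
            rw [Real.norm_eq_abs, abs_div, abs_mul,
              abs_of_nonneg (show (0:ℝ) ≤ ((ballN d q ((p:ℝ)/(k:ℝ))).card : ℝ) from Nat.cast_nonneg _),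
              abs_of_nonneg (show (0:ℝ) ≤ (p:ℝ) ^ d by positivity)]
        _ ≤ 1 * (2 ^ d * ((p:ℝ) ^ d / (k:ℝ) ^ d)) / (p:ℝ) ^ d := by
            rw [div_le_div_iff_of_pos_right (show (0:ℝ) < (p:ℝ)^d by positivity)]
            exact mul_le_mul (habs_mu k) hcard2 (Nat.cast_nonneg _) zero_le_one
        _ = (2:ℝ) ^ d * (1 / (k:ℝ) ^ d) := by
            field_simp
  have h_sum : Summable (fun k : ℕ => (2:ℝ) ^ d * (1 / (k:ℝ) ^ d)) :=
    (Real.summable_one_div_nat_pow.mpr hd).mul_left _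
  have hmain : Tendsto (fun p : ℕ => ∑' k, F p k) atTop (𝓝 (∑' k, g k)) :=
    tendsto_tsum_of_dominated_convergence h_sum hab h_bound
  have hzne : zetaR d ≠ 0 := by
    have := one_le_zetaR hd
    linarith
  have hlimit : (∑' k, g k) = Real.Gamma (1 / q + 1) ^ d / (Real.Gamma (d / q + 1) * zetaR d) := by
    have h1 : (∑' k, g k) = Vq d q * ∑' k : ℕ, ((μ k : ℤ) : ℝ) / (k:ℝ) ^ d := by
      rw [← tsum_mul_left]
      refine tsum_congr fun k => ?_
      show ((μ k : ℤ) : ℝ) * Vq d q / (k:ℝ) ^ d = _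
      ring
    have h2 : (∑' k : ℕ, ((μ k : ℤ) : ℝ) / (k:ℝ) ^ d) = 1 / zetaR d := by
      have hz := zetaR_mul_mu hd
      field_simp
      linarith [hz]
    rw [h1, h2, Vq]
    rw [div_mul_div_comm, mul_one, ← div_div]
  rw [← hlimit]
  refine Tendsto.congr' ?_ hmain
  filter_upwards [hDsum] with p hp
  rw [hcard p]
  exact hp.symm
end

section
/- Fix d ≥ 2 and q ∈ [1,∞). With D(d,p) the number of primitive points of Z^d with nonnegative coordinates and q-norm at most p, and P(d,p) the total number of primitive points of Z^d with q-norm at most p, one has 0 ≤ 2^d·D(d,p) − P(d,p) ≤ d·2^{d−1}·D(d−1,p) for all p. -/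
open Filter Pointwise

/-! ### Auxiliary lemmas -/

private lemma gcd_nn {n : ℕ} (x : Fin n → ℤ) : 0 ≤ Finset.univ.gcd x :=
  Int.nonneg_of_normalize_eq_self Finset.normalize_gcd

/-- gcd is invariant under sign flips of coordinates. -/
private lemma gcd_sign_eq {n : ℕ} (x y : Fin n → ℤ)
    (h : ∀ j, x j = y j ∨ x j = -y j) :
    Finset.univ.gcd x = Finset.univ.gcd y := by
  have key : ∀ (u v : Fin n → ℤ), (∀ j, u j = v j ∨ u j = -v j) →
      Finset.univ.gcd u ∣ Finset.univ.gcd v := by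
    intro u v huv
    refine Finset.dvd_gcd fun j _ => ?_
    have hd : Finset.univ.gcd u ∣ u j := Finset.gcd_dvd (Finset.mem_univ j)
    rcases huv j with e | e
    · rwa [e] at hd
    · rw [e] at hd; exact (dvd_neg).mp hd
  refine Int.dvd_antisymm (gcd_nn x) (gcd_nn y) (key x y h) (key y x fun j => ?_)
  rcases h j with e | e
  · exact Or.inl e.symm
  · exact Or.inr (by rw [e, neg_neg])

/-- The ball of radius p for the q-norm is finite. -/
private lemma finite_ball {n : ℕ} {q : ℝ} (hq : 0 < q) (p : ℕ) :
    {x : Fin n → ℤ | ∑ j, |(x j : ℝ)| ^ q ≤ (p : ℝ) ^ q}.Finite := by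
  apply Set.Finite.subset (Set.Finite.pi (fun i : Fin n => Set.finite_Icc (-(p : ℤ)) p))
  intro x hx
  simp only [Set.mem_setOf_eq] at hx
  simp only [Set.mem_pi, Set.mem_univ, Set.mem_Icc, forall_true_left]
  intro j
  have h1 : |(x j : ℝ)| ^ q ≤ (p : ℝ) ^ q :=
    le_trans (Finset.single_le_sum (f := fun j => |(x j : ℝ)| ^ q)
      (fun i _ => Real.rpow_nonneg (abs_nonneg _) q) (Finset.mem_univ j)) hx
  have h2 : |(x j : ℝ)| ≤ (p : ℝ) :=
    (Real.rpow_le_rpow_iff (abs_nonneg _) (Nat.cast_nonneg p) hq).mp h1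
  rw [abs_le] at h2
  constructor
  · exact_mod_cast h2.1
  · exact_mod_cast h2.2

/-- With D(d,p) the number of nonnegative primitive points of ℤ^d with q-norm ≤ p and
P(d,p) the total number of primitive points of ℤ^d with q-norm ≤ p,
0 ≤ 2^d·D(d,p) − P(d,p) ≤ d·2^(d−1)·D(d−1,p). -/
theorem stmt_14 (d : ℕ) (hd : 2 ≤ d) (q : ℝ) (hq : 1 ≤ q) (p : ℕ) :
    0 ≤ 2 ^ d *
          (Nat.card {x : Fin d → ℤ //
            IsPrimitive x ∧ (∀ j, 0 ≤ x j) ∧ ∑ j, |(x j : ℝ)| ^ q ≤ (p : ℝ) ^ q} : ℤ)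
        - (Nat.card {x : Fin d → ℤ //
            IsPrimitive x ∧ ∑ j, |(x j : ℝ)| ^ q ≤ (p : ℝ) ^ q} : ℤ) ∧
    2 ^ d *
          (Nat.card {x : Fin d → ℤ //
            IsPrimitive x ∧ (∀ j, 0 ≤ x j) ∧ ∑ j, |(x j : ℝ)| ^ q ≤ (p : ℝ) ^ q} : ℤ)
        - (Nat.card {x : Fin d → ℤ //
            IsPrimitive x ∧ ∑ j, |(x j : ℝ)| ^ q ≤ (p : ℝ) ^ q} : ℤ)
      ≤ d * 2 ^ (d - 1) *
          (Nat.card {x : Fin (d - 1) → ℤ //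
            IsPrimitive x ∧ (∀ j, 0 ≤ x j) ∧ ∑ j, |(x j : ℝ)| ^ q ≤ (p : ℝ) ^ q} : ℤ) := by
  have hq0 : (0 : ℝ) < q := lt_of_lt_of_le one_pos hq
  obtain ⟨m, rfl⟩ : ∃ m, d = m + 2 := ⟨d - 2, by omega⟩
  set A := {x : Fin (m + 2) → ℤ //
      IsPrimitive x ∧ (∀ j, 0 ≤ x j) ∧ ∑ j, |(x j : ℝ)| ^ q ≤ (p : ℝ) ^ q} with hA
  set B := {x : Fin (m + 2) → ℤ //
      IsPrimitive x ∧ ∑ j, |(x j : ℝ)| ^ q ≤ (p : ℝ) ^ q} with hB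
  set C := {x : Fin (m + 2 - 1) → ℤ //
      IsPrimitive x ∧ (∀ j, 0 ≤ x j) ∧ ∑ j, |(x j : ℝ)| ^ q ≤ (p : ℝ) ^ q} with hC
  have finsub : ∀ (n : ℕ) (P : (Fin n → ℤ) → Prop),
      (∀ x, P x → ∑ j, |(x j : ℝ)| ^ q ≤ (p : ℝ) ^ q) → Finite {x // P x} := by
    intro n P hP
    have := (finite_ball (n := n) hq0 p).to_subtype
    exact Finite.of_injective
      (fun x : {x // P x} =>
        (⟨x.1, hP x.1 x.2⟩ : {x : Fin n → ℤ | ∑ j, |(x j : ℝ)| ^ q ≤ (p : ℝ) ^ q}))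
      (fun a b hab => Subtype.ext (by simpa using congrArg Subtype.val hab))
  haveI hFA : Finite A := finsub _ _ (fun x hx => hx.2.2)
  haveI hFB : Finite B := finsub _ _ (fun x hx => hx.2)
  haveI hFC : Finite C := finsub _ _ (fun x hx => hx.2.2)
  -- Injection 1 : B ↪ A × (Fin (m+2) → Bool)
  have key1 : Nat.card B ≤ Nat.card A * 2 ^ (m + 2) := by
    have habs : ∀ x : B, IsPrimitive (fun j => |x.1 j|) ∧ (∀ j, (0:ℤ) ≤ |x.1 j|) ∧
        ∑ j, |((|x.1 j| : ℤ) : ℝ)| ^ q ≤ (p : ℝ) ^ q := by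
      intro x
      obtain ⟨⟨hne, hgcd⟩, hsum⟩ := x.2
      refine ⟨⟨?_, ?_⟩, fun j => abs_nonneg _, ?_⟩
      · intro h0
        apply hne
        funext j
        have := congrFun h0 j
        simpa [abs_eq_zero] using this
      · rw [gcd_sign_eq (fun j => |x.1 j|) x.1 (fun j => abs_choice (x.1 j))]
        exact hgcd
      · calc ∑ j, |((|x.1 j| : ℤ) : ℝ)| ^ q = ∑ j, |(x.1 j : ℝ)| ^ q := by
              refine Finset.sum_congr rfl fun j _ => ?_
              push_cast
              rw [abs_abs]
            _ ≤ (p : ℝ) ^ q := hsum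
    set f1 : B → A × (Fin (m + 2) → Bool) :=
      fun x => (⟨fun j => |x.1 j|, habs x⟩, fun j => decide (x.1 j < 0)) with hf1
    have hinj : Function.Injective f1 := by
      rintro a b hab
      rw [Prod.ext_iff] at hab
      obtain ⟨h1, h2⟩ := hab
      have h1' := congrArg Subtype.val h1
      apply Subtype.ext
      funext j
      have e1 : |a.1 j| = |b.1 j| := congrFun h1' j
      have e2 : decide (a.1 j < 0) = decide (b.1 j < 0) := congrFun h2 j
      have e3 : (a.1 j < 0) ↔ (b.1 j < 0) := by
        constructor <;> intro h
        · by_contra hbb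
          simp [h, hbb] at e2
        · by_contra haa
          simp [h, haa] at e2
      rcases abs_eq_abs.mp e1 with e | e
      · exact e
      · omega
    have := Nat.card_le_card_of_injective f1 hinj
    rwa [Nat.card_prod, Nat.card_eq_fintype_card (α := Fin (m + 2) → Bool),
      Fintype.card_fun, Fintype.card_bool, Fintype.card_fin] at this
  -- Injection 2 : A × (Fin (m+2) → Bool) ↪ B ⊕ (Fin (m+2) × (Fin (m+1) → Bool) × C)
  have key2 : Nat.card A * 2 ^ (m + 2) ≤
      Nat.card B + (m + 2) * 2 ^ (m + 1) * Nat.card C := by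
    have hinr : ∀ (y : A) (k : Fin (m + 2)), y.1 k = 0 →
        IsPrimitive (Fin.removeNth k y.1) ∧ (∀ j, 0 ≤ Fin.removeNth k y.1 j) ∧
          ∑ j, |(Fin.removeNth k y.1 j : ℝ)| ^ q ≤ (p : ℝ) ^ q := by
      intro y k hk
      obtain ⟨⟨hne, hgcd⟩, hnn, hsum⟩ := y.2
      have hg : Finset.univ.gcd (Fin.removeNth k y.1) = 1 := by
        have d1 : Finset.univ.gcd (Fin.removeNth k y.1) ∣ Finset.univ.gcd y.1 := by
          refine Finset.dvd_gcd fun j _ => ?_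
          by_cases hj : j = k
          · rw [hj, hk]; exact dvd_zero _
          · obtain ⟨i, rfl⟩ := Fin.exists_succAbove_eq (Ne.symm (fun h => hj h.symm))
            exact Finset.gcd_dvd (Finset.mem_univ i)
        have d2 : Finset.univ.gcd y.1 ∣ Finset.univ.gcd (Fin.removeNth k y.1) :=
          Finset.dvd_gcd fun i _ => Finset.gcd_dvd (Finset.mem_univ (k.succAbove i))
        rw [Int.dvd_antisymm (gcd_nn _) (gcd_nn _) d1 d2]
        exact hgcd
      refine ⟨⟨?_, hg⟩, fun j => hnn _, ?_⟩
      · intro h0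
        have hz : Finset.univ.gcd (0 : Fin (m + 1) → ℤ) = 0 :=
          Finset.gcd_eq_zero_iff.mpr (fun i _ => rfl)
        rw [h0, hz] at hg
        exact one_ne_zero hg.symm
      · have hsplit := Fin.sum_univ_succAbove (fun j => |(y.1 j : ℝ)| ^ q) k
        rw [hsplit, hk] at hsum
        simpa [Real.zero_rpow hq0.ne', Fin.removeNth] using hsum
    have hinl : ∀ (y : A) (ε : Fin (m + 2) → Bool),
        IsPrimitive (fun j => if ε j then -(y.1 j) else y.1 j) ∧
          ∑ j, |((if ε j then -(y.1 j) else y.1 j : ℤ) : ℝ)| ^ q ≤ (p : ℝ) ^ q := by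
      intro y ε
      obtain ⟨⟨hne, hgcd⟩, hnn, hsum⟩ := y.2
      refine ⟨⟨?_, ?_⟩, ?_⟩
      · intro h0
        apply hne
        funext j
        have hj := congrFun h0 j
        split at hj
        · simpa using neg_eq_zero.mp hj
        · simpa using hj
      · rw [gcd_sign_eq _ y.1 (fun j => by
          by_cases h : ε j
          · simp [h]
          · simp [h])]
        exact hgcd
      · calc ∑ j, |((if ε j then -(y.1 j) else y.1 j : ℤ) : ℝ)| ^ q
            = ∑ j, |(y.1 j : ℝ)| ^ q := by
              refine Finset.sum_congr rfl fun j _ => ?_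
              by_cases h : ε j <;> simp [h]
            _ ≤ (p : ℝ) ^ q := hsum
    set f2 : A × (Fin (m + 2) → Bool) → B ⊕ (Fin (m + 2) × (Fin (m + 1) → Bool) × C) :=
      fun z =>
        if h : ∃ k, z.1.1 k = 0 ∧ z.2 k = true then
          Sum.inr (h.choose, Fin.removeNth h.choose z.2,
            ⟨Fin.removeNth h.choose z.1.1, hinr z.1 h.choose h.choose_spec.1⟩)
        else
          Sum.inl ⟨fun j => if z.2 j then -(z.1.1 j) else z.1.1 j, (hinl z.1 z.2).1,
            (hinl z.1 z.2).2⟩ with hf2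
    have hinj2 : Function.Injective f2 := by
      rintro ⟨a, εa⟩ ⟨b, εb⟩ hab
      simp only [hf2] at hab
      by_cases ha : ∃ k, a.1 k = 0 ∧ εa k = true <;>
        by_cases hb : ∃ k, b.1 k = 0 ∧ εb k = true
      · -- both inr
        rw [dif_pos ha, dif_pos hb] at hab
        have h3 := Sum.inr.inj hab
        obtain ⟨ya0, εa1⟩ := ha.choose_spec
        obtain ⟨yb0, εb1⟩ := hb.choose_spec
        have hk : ha.choose = hb.choose := congrArg Prod.fst h3
        have h4 : Fin.removeNth ha.choose εa = Fin.removeNth hb.choose εb :=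
          congrArg (fun z => z.2.1) h3
        have h5 : Fin.removeNth ha.choose a.1 = Fin.removeNth hb.choose b.1 :=
          congrArg (fun z => (z.2.2 : C).1) h3
        rw [hk] at ya0 εa1 h4 h5
        have ea := Fin.insertNth_self_removeNth hb.choose a.1
        have eb := Fin.insertNth_self_removeNth hb.choose b.1
        rw [ya0] at ea
        rw [yb0] at eb
        have ea' := Fin.insertNth_self_removeNth hb.choose εa
        have eb' := Fin.insertNth_self_removeNth hb.choose εb
        rw [εa1] at ea'
        rw [εb1] at eb'
        have hy : a.1 = b.1 := by rw [← ea, h5, eb]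
        have hε : εa = εb := by rw [← ea', h4, eb']
        rw [Prod.mk.injEq]
        exact ⟨Subtype.ext hy, hε⟩
      · rw [dif_pos ha, dif_neg hb] at hab; simp at hab
      · rw [dif_neg ha, dif_pos hb] at hab; simp at hab
      · -- both inl
        rw [dif_neg ha, dif_neg hb] at hab
        have hx := congrArg Subtype.val (Sum.inl.inj hab)
        push_neg at ha hb
        have hkey : ∀ j, a.1 j = b.1 j ∧ εa j = εb j := by
          intro j
          have hj := congrFun hx j
          simp only at hj
          have hna := a.2.2.1 j
          have hnb := b.2.2.1 j
          have ha' := ha j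
          have hb' := hb j
          cases e1 : εa j <;> cases e2 : εb j <;> rw [e1, e2] at hj
          · simp only [Bool.false_eq_true, if_false] at hj
            exact ⟨hj, rfl⟩
          · exfalso
            simp only [Bool.false_eq_true, if_false, if_true] at hj
            have hbz : b.1 j ≠ 0 := fun h => hb' h e2
            omega
          · exfalso
            simp only [Bool.false_eq_true, if_false, if_true] at hj
            have haz : a.1 j ≠ 0 := fun h => ha' h e1
            omega
          · simp only [if_true, neg_inj] at hj
            exact ⟨hj, rfl⟩
        rw [Prod.mk.injEq]
        exact ⟨Subtype.ext (funext fun j => (hkey j).1), funext fun j => (hkey j).2⟩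
    have := Nat.card_le_card_of_injective f2 hinj2
    simp only [Nat.card_prod, Nat.card_sum, Nat.card_eq_fintype_card,
      Fintype.card_fun, Fintype.card_bool, Fintype.card_fin] at this
    calc Nat.card A * 2 ^ (m + 2) ≤ Nat.card B + (m + 2) * (2 ^ (m + 1) * Nat.card C) := this
      _ = Nat.card B + (m + 2) * 2 ^ (m + 1) * Nat.card C := by ring
  constructor
  · have : (Nat.card B : ℤ) ≤ (Nat.card A : ℤ) * 2 ^ (m + 2) := by exact_mod_cast key1
    linarith
  · have h2 : (Nat.card A : ℤ) * 2 ^ (m + 2) ≤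
        (Nat.card B : ℤ) + (m + 2) * 2 ^ (m + 1) * Nat.card C := by exact_mod_cast key2
    push_cast at h2 ⊢
    linarith
end
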